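/- Let Q be a positive definite quadratic form on ℝ^d with inner product (x,y) = xᵗQy, and let L = conv{0, v_1, …, v_d} ⊆ ℝ^d be a d-dimensional simplex. Then the circumradius of L with respect to (·,·) is at most 1 if and only if the (d+1)×(d+1) matrix BR_L(Q), whose (1,1)-entry is 4, whose remaining first-row and first-column entries are (v_i, v_i) for i = 1, …, d, and whose remaining (i+1, j+1)-entries are (v_i, v_j), is positive semidefinite. -/

import Mathlib

open Matrix Finset MeasureTheory Polynomial

noncomputable section

namespace Vor

variable {d : ℕ}

/-- The space of real `d × d` matrices (quadratic forms live in the symmetric ones). -/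
abbrev Md (d : ℕ) := Matrix (Fin d) (Fin d) ℝ

/-- Trace inner product `⟨A, B⟩ = trace (A * B)` on matrices. -/
def minner (A B : Md d) : ℝ := (A * B).trace

/-- The quadratic form `Q[x] = xᵗ Q x`. -/
def qf (Q : Md d) (x : Fin d → ℝ) : ℝ := x ⬝ᵥ Q.mulVec x

/-- The real vector associated to an integral vector. -/
def intVec (v : Fin d → ℤ) : Fin d → ℝ := fun j => (v j : ℝ)

/-- The lattice `ℤ^d` viewed inside `ℝ^d`. -/
def latticeZ (d : ℕ) : Set (Fin d → ℝ) := Set.range (intVec (d := d))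

/-- A standard periodic set `Λ = ⋃ i, (tᵢ + ℤ^d)`. -/
def IsStdPeriodic (Λ : Set (Fin d → ℝ)) : Prop :=
  ∃ m : ℕ, 0 < m ∧ ∃ t : Fin m → (Fin d → ℝ),
    Λ = {x | ∃ (i : Fin m) (v : Fin d → ℤ), x = t i + intVec v}

/-- The real matrix obtained from an integral matrix. -/
def rmat (U : Matrix (Fin d) (Fin d) ℤ) : Md d := U.map fun z => (z : ℝ)

/-- `U ∈ GL_d(ℤ)`. -/
def IsUnimodular (U : Matrix (Fin d) (Fin d) ℤ) : Prop := IsUnit U.det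

/-- The action `Q ↦ Uᵗ Q U`. -/
def conjQ (U : Matrix (Fin d) (Fin d) ℤ) (Q : Md d) : Md d := (rmat U)ᵀ * Q * rmat U

/-- The action of `GL_d(ℤ)` on subsets of the space of forms. -/
def conjSet (U : Matrix (Fin d) (Fin d) ℤ) (S : Set (Md d)) : Set (Md d) := conjQ U '' S

/-- The rational closure `S̃^d_{≥0}`: positive semidefinite forms that are
`GL_d(ℤ)`-equivalent to a block diagonal form with a zero block and a positive
definite block. -/
def RationalClosure (d : ℕ) : Set (Md d) :=
  {Q | Q.PosSemidef ∧ ∃ U : Matrix (Fin d) (Fin d) ℤ, IsUnimodular U ∧ ∃ k : ℕ, k ≤ d ∧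
    (∀ i j : Fin d, ((i : ℕ) < k ∨ (j : ℕ) < k) → conjQ U Q i j = 0) ∧
    (∀ x : Fin d → ℝ, (∀ i : Fin d, (i : ℕ) < k → x i = 0) → x ≠ 0 → 0 < qf (conjQ U Q) x)}

/-- `P` is a Delone polyhedron of the form `Q` with respect to the point set `Λ`:
`P` is the convex hull of the set `S` of points of `Λ` lying on some sphere
(center `c`, radius `r`) which contains no other point of `Λ` on it or inside. -/
def IsDelonePoly (Λ : Set (Fin d → ℝ)) (Q : Md d) (P : Set (Fin d → ℝ)) : Prop :=
  ∃ S : Set (Fin d → ℝ), S ⊆ Λ ∧ S.Nonempty ∧ P = convexHull ℝ S ∧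
    ∃ (c : Fin d → ℝ) (r : ℝ),
      (∀ v ∈ S, qf Q (c - v) = r ^ 2) ∧ ∀ v ∈ Λ, v ∉ S → r ^ 2 < qf Q (c - v)

/-- The Delone subdivision of `Q` with respect to `Λ`. -/
def DelSub (Λ : Set (Fin d → ℝ)) (Q : Md d) : Set (Set (Fin d → ℝ)) :=
  {P | IsDelonePoly Λ Q P}

/-- The secondary cone of a (Delone) subdivision `D`:
all forms in the rational closure whose Delone subdivision is `D`. -/
def SecCone (Λ : Set (Fin d → ℝ)) (D : Set (Set (Fin d → ℝ))) : Set (Md d) :=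
  {Q | Q ∈ RationalClosure d ∧ DelSub Λ Q = D}

/-- `α` gives the coefficients of an affine combination of the points of `V` representing `w`. -/
def IsAffComb (V : Finset (Fin d → ℝ)) (α : (Fin d → ℝ) → ℝ) (w : Fin d → ℝ) : Prop :=
  (∑ v ∈ V, α v) = 1 ∧ (∑ v ∈ V, α v • v) = w

/-- The form `N_{V,w} = wwᵗ - ∑_{v ∈ V} α_v vvᵗ`. -/
def Nform (V : Finset (Fin d → ℝ)) (α : (Fin d → ℝ) → ℝ) (w : Fin d → ℝ) : Md d :=
  vecMulVec w w - ∑ v ∈ V, α v • vecMulVec v v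

/-- A finite set of points is affinely independent. -/
def AffIndep (V : Finset (Fin d → ℝ)) : Prop :=
  AffineIndependent ℝ (fun v : {x // x ∈ V} => (v : Fin d → ℝ))

/-- Insertion into a finset (classical, to avoid decidability assumptions). -/
def finsert (w : Fin d → ℝ) (V : Finset (Fin d → ℝ)) : Finset (Fin d → ℝ) :=
  letI := Classical.decEq (Fin d → ℝ)
  insert w V

/-- A polyhedron: a finite intersection of closed halfspaces. -/
def IsPolyhedron (P : Set (Fin d → ℝ)) : Prop :=
  ∃ (n : ℕ) (a : Fin n → (Fin d → ℝ)) (b : Fin n → ℝ), P = {x | ∀ i, a i ⬝ᵥ x ≤ b i}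

/-- `F` is a face of `P` (cut out by a supporting hyperplane). -/
def IsFaceOf (F P : Set (Fin d → ℝ)) : Prop :=
  ∃ (a : Fin d → ℝ) (b : ℝ), (∀ x ∈ P, a ⬝ᵥ x ≤ b) ∧ F = {x ∈ P | a ⬝ᵥ x = b}

/-- The (affine) dimension of a set of points. -/
def sdim (S : Set (Fin d → ℝ)) : ℕ := Module.finrank ℝ ↥(vectorSpan ℝ S)

/-- A (face-to-face) polyhedral subdivision of `ℝ^d`. -/
def IsPolySubdiv (D : Set (Set (Fin d → ℝ))) : Prop :=
  (∀ P ∈ D, IsPolyhedron P ∧ P.Nonempty) ∧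
  ⋃₀ D = Set.univ ∧
  (∀ P ∈ D, ∀ F : Set (Fin d → ℝ), IsFaceOf F P → F.Nonempty → F ∈ D) ∧
  ∀ P ∈ D, ∀ P' ∈ D, (P ∩ P').Nonempty → IsFaceOf (P ∩ P') P

/-- `D` has vertex-set `Λ`: every member is the convex hull of its points of `Λ`. -/
def HasVertexSet (Λ : Set (Fin d → ℝ)) (D : Set (Set (Fin d → ℝ))) : Prop :=
  ∀ P ∈ D, P = convexHull ℝ (Λ ∩ P)

/-- A (closed) polyhedral cone in the space of matrices. -/
def IsPolyConeM (C : Set (Md d)) : Prop :=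
  ∃ (n : ℕ) (A : Fin n → Md d), C = {Q | ∀ i, 0 ≤ minner (A i) Q}

/-- `F` is a face of the cone `C` in the space of matrices. -/
def IsFaceOfM (F C : Set (Md d)) : Prop :=
  ∃ A : Md d, (∀ X ∈ C, 0 ≤ minner A X) ∧ F = {X ∈ C | minner A X = 0}

/-- A relatively open polyhedral cone: solutions of finitely many linear equalities and
strict linear inequalities. -/
def IsRelOpenPolyCone (C : Set (Md d)) : Prop :=
  ∃ (n m : ℕ) (A : Fin n → Md d) (B : Fin m → Md d),
    C = {Q | (∀ i, minner (A i) Q = 0) ∧ ∀ j, 0 < minner (B j) Q}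

/-- Condition (a): the linear equalities coming from the `d`-dimensional cells of `D`. -/
def condA (Λ : Set (Fin d → ℝ)) (D : Set (Set (Fin d → ℝ))) (Q : Md d) : Prop :=
  ∀ P ∈ D, sdim P = d →
    ∀ V : Finset (Fin d → ℝ), (↑V : Set (Fin d → ℝ)) ⊆ Λ ∩ P → AffIndep V → V.card = d + 1 →
      ∀ w ∈ Λ ∩ P, ∀ α : (Fin d → ℝ) → ℝ, IsAffComb V α w →
        minner (Nform V α w) Q = 0

/-- Condition (b): the linear strict inequalities coming from the `(d-1)`-dimensional
cells of `D`. -/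
def condB (Λ : Set (Fin d → ℝ)) (D : Set (Set (Fin d → ℝ))) (Q : Md d) : Prop :=
  ∀ F ∈ D, sdim F = d - 1 →
    ∀ P ∈ D, ∀ P' ∈ D, sdim P = d → sdim P' = d → P ≠ P' → F = P ∩ P' →
      ∀ V : Finset (Fin d → ℝ), (↑V : Set (Fin d → ℝ)) ⊆ Λ ∩ F → AffIndep V → V.card = d →
        ∀ w ∈ (Λ ∩ P) \ F, ∀ w' ∈ (Λ ∩ P') \ F,
          ∀ α : (Fin d → ℝ) → ℝ, IsAffComb (finsert w V) α w' →
            0 < minner (Nform (finsert w V) α w') Q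

/-- The lifting map `w_Q(x) = (x, Q[x]) ∈ ℝ^{d+1}`. -/
def liftQ (Q : Md d) (x : Fin d → ℝ) : Fin (d + 1) → ℝ := Fin.snoc x (qf Q x)

/-- Projection `ℝ^{d+1} → ℝ^d` onto the first `d` coordinates. -/
def projd (y : Fin (d + 1) → ℝ) : Fin d → ℝ := fun i => y i.castSucc

/-- `G` is a finite subgroup of `GL_d(ℤ)` (given as a set of integral matrices). -/
def IsFinMatGroup (G : Set (Matrix (Fin d) (Fin d) ℤ)) : Prop :=
  G.Finite ∧ (1 : Matrix (Fin d) (Fin d) ℤ) ∈ G ∧ (∀ g ∈ G, IsUnimodular g) ∧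
    (∀ g ∈ G, ∀ h ∈ G, g * h ∈ G) ∧ ∀ g ∈ G, g⁻¹ ∈ G

/-- The space of invariant forms `F(G)` of `G ≤ GL_d(ℤ)`. -/
def FG (G : Set (Matrix (Fin d) (Fin d) ℤ)) : Set (Md d) :=
  {Q | Q.IsSymm ∧ ∀ g ∈ G, conjQ g Q = Q}

/-- The Bravais group `B(G)`: the pointwise stabilizer of `F(G)` in `GL_d(ℤ)`. -/
def BG (G : Set (Matrix (Fin d) (Fin d) ℤ)) : Set (Matrix (Fin d) (Fin d) ℤ) :=
  {g | IsUnimodular g ∧ ∀ Q ∈ FG G, conjQ g Q = Q}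

/-- The normalizer `N(B(G))` of the Bravais group in `GL_d(ℤ)`. -/
def NBG (G : Set (Matrix (Fin d) (Fin d) ℤ)) : Set (Matrix (Fin d) (Fin d) ℤ) :=
  {n | IsUnimodular n ∧ ∀ b : Matrix (Fin d) (Fin d) ℤ, b ∈ BG G ↔ n⁻¹ * b * n ∈ BG G}

/-- The inhomogeneous minimum `μ(Q) = sup_x inf_{v ∈ ℤ^d} Q[x - v]`. -/
def InhomMin (Q : Md d) : ℝ :=
  ⨆ x : Fin d → ℝ, ⨅ v : Fin d → ℤ, qf Q (x - intVec v)

/-- The bilinear form `(x, y) = xᵗ Q y` associated to `Q`. -/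
def bip (Q : Md d) (x y : Fin d → ℝ) : ℝ := x ⬝ᵥ Q.mulVec y

/-- `F` is a facet of the subdivision `D`: a `(d-1)`-dimensional cell, the intersection of
two adjacent `d`-dimensional cells. -/
def IsFacetOfSubdiv (D : Set (Set (Fin d → ℝ))) (F : Set (Fin d → ℝ)) : Prop :=
  F ∈ D ∧ sdim F = d - 1 ∧
    ∃ P ∈ D, ∃ P' ∈ D, sdim P = d ∧ sdim P' = d ∧ P ≠ P' ∧ F = P ∩ P'

/-- The linear subspace `U` of forms satisfying all equalities of the secondary cone of `D`. -/
def UD (Λ : Set (Fin d → ℝ)) (D : Set (Set (Fin d → ℝ))) : Set (Md d) :=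
  {X | X.IsSymm ∧ condA Λ D X}

/-- `ND` assigns to each facet `F` of `D` the form `N_{D,F}`: the unit-norm form in `U`
such that the projection onto `U` of every form `N_{V∪{w},w'}` attached to `F` is a
positive multiple of it. -/
def IsNDassign (Λ : Set (Fin d → ℝ)) (D : Set (Set (Fin d → ℝ)))
    (ND : Set (Fin d → ℝ) → Md d) : Prop :=
  ∀ F, IsFacetOfSubdiv D F → ND F ∈ UD Λ D ∧ minner (ND F) (ND F) = 1 ∧
    ∀ P ∈ D, ∀ P' ∈ D, sdim P = d → sdim P' = d → P ≠ P' → F = P ∩ P' →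
      ∀ V : Finset (Fin d → ℝ), (↑V : Set (Fin d → ℝ)) ⊆ Λ ∩ F → AffIndep V → V.card = d →
        ∀ w ∈ (Λ ∩ P) \ F, ∀ w' ∈ (Λ ∩ P') \ F,
          ∀ α : (Fin d → ℝ) → ℝ, IsAffComb (finsert w V) α w' →
            ∃ β : ℝ, 0 < β ∧ ∀ X ∈ UD Λ D,
              minner (Nform (finsert w V) α w') X = β * minner (ND F) X

/-- The set `R_F` of facets of `D` whose form `N_{D,F'}` projects onto `T` to a positive
multiple of `NF`. -/
def RFset (Λ : Set (Fin d → ℝ)) (D : Set (Set (Fin d → ℝ)))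
    (ND : Set (Fin d → ℝ) → Md d) (T : Set (Md d)) (NF : Md d) :
    Set (Set (Fin d → ℝ)) :=
  {F | IsFacetOfSubdiv D F ∧ ∃ γ : ℝ, 0 < γ ∧ ∀ X ∈ T, minner (ND F) X = γ * minner NF X}

/-- The chain relation on the facets of `R_F`: connected by a chain of adjacent
`d`-dimensional cells of `D`. -/
def FlipRel (D RFs : Set (Set (Fin d → ℝ))) (F1 F2 : Set (Fin d → ℝ)) : Prop :=
  ∃ (n : ℕ) (Fch : Fin (n + 1) → Set (Fin d → ℝ)) (Pch : Fin (n + 2) → Set (Fin d → ℝ)),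
    Fch 0 = F1 ∧ Fch (Fin.last n) = F2 ∧ (∀ i, Fch i ∈ RFs) ∧
    ∀ i : Fin (n + 1), Pch i.castSucc ∈ D ∧ Pch i.succ ∈ D ∧
      sdim (Pch i.castSucc) = d ∧ sdim (Pch i.succ) = d ∧
      Fch i = Pch i.castSucc ∩ Pch i.succ

/-- `C` is an equivalence class of the chain relation on `RFs`. -/
def IsEqClass (D RFs C : Set (Set (Fin d → ℝ))) : Prop :=
  C ⊆ RFs ∧ C.Nonempty ∧ ∀ F1 ∈ C, ∀ F2 ∈ RFs, (FlipRel D RFs F1 F2 ↔ F2 ∈ C)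

/-- The vertex set `V_C` of an equivalence class `C`: all vertices of `d`-dimensional
cells of `D` having a facet in `C`. -/
def VCset (Λ : Set (Fin d → ℝ)) (D C : Set (Set (Fin d → ℝ))) : Set (Fin d → ℝ) :=
  {x | ∃ P ∈ D, sdim P = d ∧ (∃ F ∈ C, IsFaceOf F P) ∧ x ∈ Λ ∩ P}

/-- A lower facet of a set in `ℝ^{d+1}`: a facet whose outer normal has negative last
coordinate. -/
def IsLowerFacet (S F : Set (Fin (d + 1) → ℝ)) : Prop :=
  ∃ (a : Fin (d + 1) → ℝ) (b : ℝ), (∀ x ∈ S, a ⬝ᵥ x ≤ b) ∧ F = {x ∈ S | a ⬝ᵥ x = b} ∧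
    Module.finrank ℝ ↥(vectorSpan ℝ F) = d ∧ a (Fin.last d) < 0

/-- An upper facet of a set in `ℝ^{d+1}`: a facet whose outer normal has positive last
coordinate. -/
def IsUpperFacet (S F : Set (Fin (d + 1) → ℝ)) : Prop :=
  ∃ (a : Fin (d + 1) → ℝ) (b : ℝ), (∀ x ∈ S, a ⬝ᵥ x ≤ b) ∧ F = {x ∈ S | a ⬝ᵥ x = b} ∧
    Module.finrank ℝ ↥(vectorSpan ℝ F) = d ∧ 0 < a (Fin.last d)

/-- The `(d+1) × (d+1)` matrix `BR_L(Q)` of a simplex `L = conv{0, v₁, …, v_d}`: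
its `(1,1)`-entry is `4`, remaining first row/column entries are `(vᵢ, vᵢ)`, and
remaining entries are `(vᵢ, vⱼ)`, where `(x, y) = xᵗ Q y`. -/
def BRmat (Q : Md d) (v : Fin d → (Fin d → ℝ)) :
    Matrix (Fin (d + 1)) (Fin (d + 1)) ℝ :=
  Matrix.of fun i j =>
    if hi : i = 0 then
      (if hj : j = 0 then 4 else bip Q (v (j.pred hj)) (v (j.pred hj)))
    else if hj : j = 0 then bip Q (v (i.pred hi)) (v (i.pred hi))
    else bip Q (v (i.pred hi)) (v (j.pred hj))

/-- For a positive definite `Q` and a `d`-simplex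
`L = conv{0, v₁, …, v_d}`, the circumradius of `L` with respect to `(x,y) = xᵗQy` is at
most `1` if and only if `BR_L(Q)` is positive semidefinite. -/
theorem statement16 (d : ℕ) (Q : Md d) (hQ : Q.PosDef)
    (v : Fin d → (Fin d → ℝ)) (hv : LinearIndependent ℝ v) :
    (∃ c : Fin d → ℝ, (∀ i, qf Q (c - v i) = qf Q c) ∧ qf Q c ≤ 1) ↔
      (BRmat Q v).PosSemidef := by
  classical
  have hQs : Qᵀ = Q := hQ.1
  -- symmetry of the bilinear form
  have hbip : ∀ x y : Fin d → ℝ, bip Q x y = bip Q y x := by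
    intro x y
    simp only [bip]
    rw [dotProduct_mulVec, ← Matrix.mulVec_transpose, hQs, dotProduct_comm]
  have hqfb : ∀ x : Fin d → ℝ, qf Q x = bip Q x x := fun x => rfl
  -- expansion of qf of a difference
  have hsub : ∀ x y : Fin d → ℝ,
      qf Q (x - y) = qf Q x - 2 * bip Q x y + qf Q y := by
    intro x y
    have hb := hbip y x
    simp only [qf, bip, Matrix.mulVec_sub, dotProduct_sub, sub_dotProduct] at *
    ring_nf
    linarith [hb]
  -- expansion of qf of x + s • z
  have hbsmul : ∀ (x z : Fin d → ℝ) (s : ℝ), bip Q x (s • z) = s * bip Q x z := by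
    intro x z s
    simp [bip, Matrix.mulVec_smul, dotProduct_smul]
  have hqsmul : ∀ (z : Fin d → ℝ) (s : ℝ), qf Q (s • z) = s ^ 2 * qf Q z := by
    intro z s
    simp only [qf, Matrix.mulVec_smul, dotProduct_smul, smul_dotProduct, smul_eq_mul]
    ring
  have hadd : ∀ (x z : Fin d → ℝ) (s : ℝ),
      qf Q (x + s • z) = qf Q x + 2 * s * bip Q x z + s ^ 2 * qf Q z := by
    intro x z s
    have h := hsub x ((-s) • z)
    rw [hbsmul, hqsmul, neg_smul, sub_neg_eq_add] at h
    rw [h]; ring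
  -- nonnegativity of qf
  have hqf0 : ∀ x : Fin d → ℝ, 0 ≤ qf Q x := by
    intro x
    have := hQ.posSemidef.dotProduct_mulVec_nonneg x
    simpa [qf] using this
  -- the Gram matrix
  set Gm : Md d := Matrix.of (fun i j => bip Q (v i) (v j)) with hGm
  set Vm : Md d := Matrix.of v with hVm
  have hGVQ : Gm = Vm * Q * Vmᵀ := by
    ext i j
    simp only [hGm, hVm, Matrix.mul_apply, Matrix.of_apply, Matrix.transpose_apply, bip,
      dotProduct, Matrix.mulVec, Finset.sum_mul, Finset.mul_sum]
    rw [Finset.sum_comm]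
    exact Finset.sum_congr rfl fun k _ => Finset.sum_congr rfl fun l _ => by ring
  -- Vᵀ *ᵥ α as a linear combination
  have hVt : ∀ α : Fin d → ℝ, Vmᵀ *ᵥ α = ∑ i, α i • v i := by
    intro α
    funext j
    simp [hVm, Matrix.mulVec, dotProduct, Finset.sum_apply, mul_comm]
  -- α G α = qf Q (Vᵀ α)
  have hGqf : ∀ α : Fin d → ℝ, α ⬝ᵥ Gm *ᵥ α = qf Q (Vmᵀ *ᵥ α) := by
    intro α
    rw [hGVQ, qf, ← Matrix.mulVec_mulVec, ← Matrix.mulVec_mulVec, dotProduct_mulVec,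
      ← Matrix.mulVec_transpose]
  -- bilinearity in the second argument
  have hlin : ∀ c α : Fin d → ℝ, bip Q c (Vmᵀ *ᵥ α) = ∑ i, α i * bip Q c (v i) := by
    intro c α
    rw [bip, dotProduct_mulVec, dotProduct_mulVec, dotProduct]
    refine Finset.sum_congr rfl fun i _ => ?_
    rw [mul_comm]; congr 1
    rw [bip, dotProduct_mulVec]
    simp [hVm, Matrix.vecMul, dotProduct]
  -- the key quadratic identity for BRmat
  have key : ∀ y : Fin (d + 1) → ℝ,
      y ⬝ᵥ (BRmat Q v) *ᵥ y =
        4 * (y 0) ^ 2 + 2 * y 0 * (∑ i, bip Q (v i) (v i) * y i.succ)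
          + (fun i => y i.succ) ⬝ᵥ Gm *ᵥ (fun i => y i.succ) := by
    intro y
    have hrhs : (fun i => y i.succ) ⬝ᵥ Gm *ᵥ (fun i => y i.succ)
        = ∑ i, ∑ j, y i.succ * (bip Q (v i) (v j) * y j.succ) := by
      simp [hGm, dotProduct, Matrix.mulVec, Finset.mul_sum]
    rw [hrhs]
    simp only [dotProduct, Matrix.mulVec, BRmat, Matrix.of_apply, dotProduct,
      Fin.sum_univ_succ, Fin.succ_ne_zero, Fin.pred_succ, dite_true, dite_false,
      dif_pos, dif_neg, not_false_iff, reduceDIte]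
    simp only [Finset.mul_sum, Finset.sum_mul, Finset.sum_add_distrib, mul_add, add_mul]
    ring_nf
    rw [Finset.sum_comm]
    have h1 : ∑ x : Fin d, y x.succ * bip Q (v x) (v x) * y 0
        = ∑ x : Fin d, y 0 * bip Q (v x) (v x) * y x.succ :=
      Finset.sum_congr rfl fun x _ => by ring
    have h2 : ∑ x : Fin d, y 0 * 2 * bip Q (v x) (v x) * y x.succ
        = ∑ x : Fin d, y 0 * bip Q (v x) (v x) * y x.succ
          + ∑ x : Fin d, y 0 * bip Q (v x) (v x) * y x.succ := by
      rw [← Finset.sum_add_distrib]; exact Finset.sum_congr rfl fun x _ => by ring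
    have h3 : ∑ x : Fin d, y 0 * bip Q (v x) (v x) * y x.succ * 2
        = ∑ x : Fin d, y 0 * bip Q (v x) (v x) * y x.succ
          + ∑ x : Fin d, y 0 * y x.succ * bip Q (v x) (v x) := by
      rw [← Finset.sum_add_distrib]; exact Finset.sum_congr rfl fun x _ => by ring
    rw [h3]; ring
  -- Hermitian-ness of BRmat
  have hherm : (BRmat Q v).IsHermitian := by
    show (BRmat Q v)ᴴ = BRmat Q v
    ext i j
    simp only [Matrix.conjTranspose_apply, star_trivial, BRmat, Matrix.of_apply]
    rcases eq_or_ne i 0 with hi | hi <;> rcases eq_or_ne j 0 with hj | hj <;>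
      simp [hi, hj, hbip]
  constructor
  · rintro ⟨c, hc, hc1⟩
    have hc' : ∀ i, bip Q (v i) (v i) = 2 * bip Q c (v i) := by
      intro i
      have := hsub c (v i)
      rw [hc i, hqfb (v i)] at this
      linarith
    refine PosSemidef.of_dotProduct_mulVec_nonneg hherm fun y => ?_
    have hy : star y = y := by funext i; simp
    rw [hy, key y]
    set t := y 0 with ht
    set α : Fin d → ℝ := fun i => y i.succ with hα
    have hb : (∑ i, bip Q (v i) (v i) * α i) = 2 * bip Q c (Vmᵀ *ᵥ α) := by
      rw [hlin c α, Finset.mul_sum]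
      exact Finset.sum_congr rfl fun i _ => by rw [hc' i]; ring
    rw [hGqf α, hb]
    set w : Fin d → ℝ := Vmᵀ *ᵥ α with hw
    have hexp := hadd w c (2 * t)
    have hcw : bip Q w c = bip Q c w := hbip w c
    have h1 : 0 ≤ qf Q (w + (2 * t) • c) := hqf0 _
    have h2 : 0 ≤ (2 * t) ^ 2 * (1 - qf Q c) := by
      have := sq_nonneg (2 * t)
      nlinarith
    rw [hcw] at hexp
    linarith [h1, h2, hexp]
  · intro hM
    -- G is positive definite
    have hGpd : Gm.PosDef := by
      refine PosDef.of_dotProduct_mulVec_pos ?_ ?_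
      · show Gmᴴ = Gm
        ext i j
        simp [hGm, Matrix.conjTranspose_apply, hbip (v j) (v i)]
      · intro x hx
        have hx' : Vmᵀ *ᵥ x ≠ 0 := by
          intro h0
          apply hx
          have := (Fintype.linearIndependent_iff.mp hv) x (by rw [← hVt x]; exact h0)
          funext i; exact this i
        have := hQ.dotProduct_mulVec_pos hx'
        have hst : star x = x := by funext i; simp
        rw [hst, hGqf x]
        simpa [qf, star, hst] using this
    have hGu : IsUnit Gm.det := isUnit_iff_ne_zero.mpr (ne_of_gt hGpd.det_pos)
    set b : Fin d → ℝ := fun i => bip Q (v i) (v i) with hbdef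
    set α : Fin d → ℝ := Gm⁻¹ *ᵥ ((1 / 2 : ℝ) • b) with hαdef
    have hGα : Gm *ᵥ α = (1 / 2 : ℝ) • b := by
      rw [hαdef, Matrix.mulVec_mulVec, Matrix.mul_nonsing_inv Gm hGu, Matrix.one_mulVec]
    set c : Fin d → ℝ := Vmᵀ *ᵥ α with hcdef
    -- (Gm *ᵥ α) i = bip Q (v i) c
    have hGαi : ∀ i, (Gm *ᵥ α) i = bip Q (v i) c := by
      intro i
      rw [hcdef, hlin (v i) α]
      simp [hGm, Matrix.mulVec, dotProduct, mul_comm]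
    have hb2 : ∀ i, bip Q (v i) (v i) = 2 * bip Q c (v i) := by
      intro i
      have h1 : bip Q (v i) c = (1 / 2 : ℝ) * b i := by
        rw [← hGαi i, hGα]; simp
      rw [hbip c (v i), h1, hbdef]
      ring
    refine ⟨c, fun i => ?_, ?_⟩
    · rw [hsub c (v i), hqfb (v i), hb2 i]; ring
    · -- qf Q c = α ⬝ᵥ Gm *ᵥ α
      have hqc : qf Q c = (1 / 2 : ℝ) * (∑ i, b i * α i) := by
        rw [hcdef, ← hGqf α]
        rw [dotProduct, hGα]
        simp [Finset.mul_sum]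
        exact Finset.sum_congr rfl fun i _ => by ring
      -- apply positive semidefiniteness to y = (-(1/2), α)
      set y : Fin (d + 1) → ℝ := Fin.cons (-(1 / 2 : ℝ)) α with hy
      have h0 := hM.dotProduct_mulVec_nonneg y
      have hst : star y = y := by funext i; simp
      rw [hst, key y] at h0
      have hy0 : y 0 = -(1 / 2 : ℝ) := rfl
      have hys : ∀ i : Fin d, y i.succ = α i := fun i => rfl
      have hsum : (∑ i, bip Q (v i) (v i) * y i.succ) = ∑ i, b i * α i := by
        exact Finset.sum_congr rfl fun i _ => by rw [hys i, hbdef]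
      have hquad : (fun i => y i.succ) ⬝ᵥ Gm *ᵥ (fun i => y i.succ) = qf Q c := by
        have : (fun i => y i.succ) = α := by funext i; exact hys i
        rw [this, hGqf α, ← hcdef]
      rw [hy0, hsum, hquad] at h0
      nlinarith [h0, hqc]

end Vor

end
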